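/- Let (x,z) be a feasible solution to Forest-BCR, let r₀, r₁, …, r_{k−1} be an enumeration of the terminals R, and let A be a set of ordered pairs of terminals such that {r_i, r_j} ∈ 𝒫 for every (r_i, r_j) ∈ A, such that i < j for every (r_i, r_j) ∈ A, such that every r_j with j ≥ 1 has exactly one entering arc in A, and r₀ has none. Let w ∈ V, define λ_i = max{ z^w_P : P ∈ 𝒫, P ∩ {r₀, …, r_i} ≠ ∅ }, μ₀ = λ₀ and μ_i = λ_i − λ_{i−1}, and let f be a vector on directed edges with 0 ≤ f_e ≤ x^w_e, with net outflow ∑_{e∈δ⁺({r_i})} f_e − ∑_{e∈δ⁻({r_i})} f_e = μ_i at every r_i ∈ R∖{w}, and with zero net outflow at every v ∈ V∖(R∪{w}). Define x̄^w_{(u,v)} = x^w_{(u,v)} − f_{(u,v)} + f_{(v,u)} for every directed edge (u,v). Then for every U ⊆ V∖{r₀} with R∩U ≠ ∅, letting j = min{ i : r_i ∈ U }, letting (r_i, r_j) be the unique arc of A entering r_j, and letting P = {r_i, r_j}, one has ∑_{e∈δ⁺(U)} x̄^w_e ≥ z^w_P. -/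
import Mathlib


open Finset

noncomputable section

variable {V : Type*}

/-- The set of terminals: vertices occurring in some pair of `P`. -/
def terminals [Fintype V] [DecidableEq V] (P : Finset (Finset V)) : Finset V :=
  Finset.univ.filter fun v => ∃ p ∈ P, v ∈ p

/-- Feasibility for the Forest-BCR linear program: `x r u v` is the value of the
variable `x^r_{(u,v)}` and `z r p` is the value of `z^r_P`. -/
def ForestBCRFeasible [Fintype V] [DecidableEq V] (P : Finset (Finset V))
    (x : V → V → V → ℝ) (z : V → Finset V → ℝ) : Prop :=
  (∀ r u v : V, u ≠ v → 0 ≤ x r u v) ∧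
  (∀ r : V, ∀ p ∈ P, 0 ≤ z r p) ∧
  (∀ p ∈ P, ∑ r : V, z r p = 1) ∧
  (∀ r : V, ∀ p ∈ P, ∀ U : Finset V, r ∉ U → (p ∩ U).Nonempty →
    z r p ≤ ∑ u ∈ U, ∑ v ∈ Uᶜ, x r u v)

/-- The cost `c(x)` of a Forest-BCR solution. -/
def bcrCost [Fintype V] [DecidableEq V] (c : V → V → ℝ) (x : V → V → V → ℝ) : ℝ :=
  ∑ r : V, ∑ u : V, ∑ v ∈ Finset.univ.erase u, c u v * x r u v

/-- Half-integrality of a Forest-BCR solution. -/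
def HalfIntegralSol [Fintype V] [DecidableEq V] (P : Finset (Finset V))
    (x : V → V → V → ℝ) (z : V → Finset V → ℝ) : Prop :=
  (∀ r u v : V, u ≠ v → ∃ n : ℤ, x r u v = n / 2) ∧
  (∀ r : V, ∀ p ∈ P, ∃ n : ℤ, z r p = n / 2)

/-- The solution `x` is supported on the graph `G`. -/
def SupportedOn (G : SimpleGraph V) (x : V → V → V → ℝ) : Prop :=
  ∀ r u v : V, u ≠ v → ¬ G.Adj u v → x r u v = 0

lemma sum_pairs_antisymm [Fintype V] [DecidableEq V] (f : V → V → ℝ) (U : Finset V) :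
    ∑ v ∈ U, ∑ u ∈ U.erase v, (f v u - f u v) = 0 := by
  have h1 : ∀ v ∈ U, ∑ u ∈ U.erase v, (f v u - f u v) = ∑ u ∈ U, (f v u - f u v) := by
    intro v _; exact Finset.sum_erase _ (by ring)
  rw [Finset.sum_congr rfl h1]
  have h2 : ∑ v ∈ U, ∑ u ∈ U, (f v u - f u v)
      = ∑ u ∈ U, ∑ v ∈ U, (f v u - f u v) := Finset.sum_comm
  have h3 : ∑ u ∈ U, ∑ v ∈ U, (f v u - f u v)
      = - ∑ v ∈ U, ∑ u ∈ U, (f v u - f u v) := by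
    rw [← Finset.sum_neg_distrib]
    apply Finset.sum_congr rfl
    intro u _
    rw [← Finset.sum_neg_distrib]
    apply Finset.sum_congr rfl
    intro v _
    ring
  linarith

lemma flow_account [Fintype V] [DecidableEq V] (f : V → V → ℝ) (U : Finset V) :
    (∑ u ∈ U, ∑ v ∈ Uᶜ, f u v) - (∑ u ∈ U, ∑ v ∈ Uᶜ, f v u)
      = ∑ v ∈ U, ((∑ u ∈ Finset.univ.erase v, f v u) - (∑ u ∈ Finset.univ.erase v, f u v)) := by
  have hdecomp : ∀ v ∈ U, (Finset.univ : Finset V).erase v = U.erase v ∪ Uᶜ := by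
    intro v hv; ext u
    simp only [Finset.mem_erase, Finset.mem_union, Finset.mem_compl, Finset.mem_univ, and_true]
    by_cases h : u ∈ U <;> by_cases h2 : u = v <;> simp_all
  have hdisj : ∀ v ∈ U, Disjoint (U.erase v) Uᶜ := by
    intro v _
    exact Finset.disjoint_left.mpr fun u hu => by
      simp only [Finset.mem_compl]
      exact fun h => h (Finset.mem_of_mem_erase hu)
  have step : ∀ v ∈ U,
      (∑ u ∈ Finset.univ.erase v, f v u) - (∑ u ∈ Finset.univ.erase v, f u v)
        = ∑ u ∈ U.erase v, (f v u - f u v) + ∑ u ∈ Uᶜ, (f v u - f u v) := by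
    intro v hv
    rw [← Finset.sum_sub_distrib, hdecomp v hv, Finset.sum_union (hdisj v hv)]
  rw [Finset.sum_congr rfl step, Finset.sum_add_distrib, sum_pairs_antisymm, zero_add,
    ← Finset.sum_sub_distrib]
  apply Finset.sum_congr rfl
  intro v _
  rw [← Finset.sum_sub_distrib]

/-- With a topologically numbered arborescence `A` of demand pairs on
the terminals rooted at `r 0`, and a flow `f` as in the flow lemma, the reoriented
vector `x̄^w = x^w − f + f^reverse` satisfies, for every set `U ∌ r 0` containing a
terminal: if `r j` is the minimum-index terminal in `U` and `(r i, r j)` is the arc of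
`A` entering `r j`, then `x̄^w(δ⁺(U)) ≥ z^w_{{r i, r j}}`. -/
theorem reoriented_solution_cut_value [Fintype V] [DecidableEq V]
    (P : Finset (Finset V)) (hP : ∀ p ∈ P, p.card = 2)
    (x : V → V → V → ℝ) (z : V → Finset V → ℝ)
    (hfeas : ForestBCRFeasible P x z)
    (k : ℕ) (r : ℕ → V)
    (hr_mem : ∀ i < k, r i ∈ terminals P)
    (hr_inj : ∀ i < k, ∀ j < k, r i = r j → i = j)
    (hr_surj : ∀ v ∈ terminals P, ∃ i < k, r i = v)
    (A : Finset (ℕ × ℕ))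
    (hA_arcs : ∀ a ∈ A, a.1 < a.2 ∧ a.2 < k ∧ ({r a.1, r a.2} : Finset V) ∈ P)
    (hA_unique : ∀ j : ℕ, 0 < j → j < k → ∃! i : ℕ, (i, j) ∈ A)
    (hA_root : ∀ i : ℕ, (i, 0) ∉ A)
    (w : V)
    (lam : ℕ → ℝ)
    (hlam : ∀ i < k,
      IsGreatest {t : ℝ | ∃ p ∈ P, (∃ j ≤ i, r j ∈ p) ∧ t = z w p} (lam i))
    (mu : ℕ → ℝ)
    (hmu : ∀ i < k, mu i = if i = 0 then lam 0 else lam i - lam (i - 1))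
    (f : V → V → ℝ)
    (hf_cap : ∀ u v : V, u ≠ v → 0 ≤ f u v ∧ f u v ≤ x w u v)
    (hf_out : ∀ i < k, r i ≠ w →
      (∑ u ∈ Finset.univ.erase (r i), f (r i) u) -
        (∑ u ∈ Finset.univ.erase (r i), f u (r i)) = mu i)
    (hf_cons : ∀ v : V, v ∉ terminals P → v ≠ w →
      (∑ u ∈ Finset.univ.erase v, f v u) -
        (∑ u ∈ Finset.univ.erase v, f u v) = 0)
    (xbar : V → V → ℝ)
    (hxbar : ∀ u v : V, xbar u v = x w u v - f u v + f v u) :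
    ∀ U : Finset V, r 0 ∉ U →
      ∀ j < k, r j ∈ U → (∀ j' < j, r j' ∉ U) →
        ∀ i : ℕ, (i, j) ∈ A →
          z w ({r i, r j} : Finset V) ≤ ∑ u ∈ U, ∑ v ∈ Uᶜ, xbar u v := by
  intro U hU0 j hjk hjU hjmin i hiA
  obtain ⟨hij, hjk2, hpP⟩ := hA_arcs (i, j) hiA
  simp only at hij hjk2 hpP
  have hj1 : 1 ≤ j := by
    rcases Nat.eq_zero_or_pos j with h | h
    · exact absurd (h ▸ hjU) hU0
    · exact h
  have hzle : z w ({r i, r j} : Finset V) ≤ lam (j - 1) := by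
    refine (hlam (j - 1) (by omega)).2 ?_
    exact ⟨{r i, r j}, hpP, ⟨i, by omega, Finset.mem_insert_self _ _⟩, rfl⟩
  have hlam0 : ∀ l < k, 0 ≤ lam l := by
    intro l hl
    obtain ⟨p, hp, _, heq⟩ := (hlam l hl).1
    rw [heq]; exact hfeas.2.1 w p hp
  have hmono : ∀ l, 1 ≤ l → l < k → lam (l - 1) ≤ lam l := by
    intro l h1 hl
    obtain ⟨p, hp, ⟨t, ht, hrt⟩, heq⟩ := (hlam (l - 1) (by omega)).1
    exact (hlam l hl).2 ⟨p, hp, ⟨t, by omega, hrt⟩, heq⟩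
  have hmupos : ∀ l, l < k → 0 ≤ mu l := by
    intro l hl; rw [hmu l hl]
    split
    · exact hlam0 0 (by omega)
    · next h =>
      have := hmono l (by omega) hl; linarith
  have htel : ∀ d a, 1 ≤ a → a - 1 + d < k →
      ∑ l ∈ Finset.Icc a (a - 1 + d), mu l = lam (a - 1 + d) - lam (a - 1) := by
    intro d
    induction d with
    | zero =>
      intro a ha _
      rw [Finset.Icc_eq_empty (by omega)]
      simp
    | succ d ih =>
      intro a ha hk'
      have h1 : a - 1 + (d + 1) = (a - 1 + d) + 1 := by omega
      rw [h1, Finset.sum_Icc_succ_top (by omega), ih a ha (by omega),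
        hmu ((a - 1 + d) + 1) (by omega), if_neg (by omega)]
      have h2 : (a - 1 + d + 1) - 1 = a - 1 + d := by omega
      rw [h2]; ring
  have hkey : ∀ W : Finset V, w ∉ W →
      ∑ v ∈ W, ((∑ u ∈ Finset.univ.erase v, f v u) - (∑ u ∈ Finset.univ.erase v, f u v))
        = ∑ l ∈ (Finset.range k).filter (fun l => r l ∈ W), mu l := by
    intro W hwW
    set dd : V → ℝ := fun v =>
      (∑ u ∈ Finset.univ.erase v, f v u) - (∑ u ∈ Finset.univ.erase v, f u v) with hdd
    have hsplit := Finset.sum_filter_add_sum_filter_not W (fun v => v ∈ terminals P) dd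
    have h0 : ∑ v ∈ W.filter (fun v => ¬ (v ∈ terminals P)), dd v = 0 := by
      apply Finset.sum_eq_zero
      intro v hv
      rw [Finset.mem_filter] at hv
      exact hf_cons v hv.2 (fun h => hwW (h ▸ hv.1))
    have himg : W.filter (fun v => v ∈ terminals P)
        = ((Finset.range k).filter (fun l => r l ∈ W)).image r := by
      ext v
      simp only [Finset.mem_filter, Finset.mem_image, Finset.mem_range]
      constructor
      · rintro ⟨hvW, hvt⟩
        obtain ⟨l, hl, hrl⟩ := hr_surj v hvt
        exact ⟨l, ⟨hl, hrl ▸ hvW⟩, hrl⟩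
      · rintro ⟨l, ⟨hl, hrlW⟩, rfl⟩
        exact ⟨hrlW, hr_mem l hl⟩
    have hinj : ∀ a ∈ (Finset.range k).filter (fun l => r l ∈ W),
        ∀ b ∈ (Finset.range k).filter (fun l => r l ∈ W), r a = r b → a = b := by
      intro a ha b hb hab
      rw [Finset.mem_filter, Finset.mem_range] at ha hb
      exact hr_inj a ha.1 b hb.1 hab
    calc ∑ v ∈ W, dd v
        = ∑ v ∈ W.filter (fun v => v ∈ terminals P), dd v
          + ∑ v ∈ W.filter (fun v => ¬ (v ∈ terminals P)), dd v := hsplit.symm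
      _ = ∑ v ∈ ((Finset.range k).filter (fun l => r l ∈ W)).image r, dd v := by
          rw [h0, add_zero, himg]
      _ = ∑ l ∈ (Finset.range k).filter (fun l => r l ∈ W), dd (r l) :=
          Finset.sum_image hinj
      _ = ∑ l ∈ (Finset.range k).filter (fun l => r l ∈ W), mu l := by
          apply Finset.sum_congr rfl
          intro l hl
          rw [Finset.mem_filter, Finset.mem_range] at hl
          exact hf_out l hl.1 (fun h => hwW (h ▸ hl.2))
  have hxbarcut : ∑ u ∈ U, ∑ v ∈ Uᶜ, xbar u v
      = (∑ u ∈ U, ∑ v ∈ Uᶜ, x w u v)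
        - ((∑ u ∈ U, ∑ v ∈ Uᶜ, f u v) - (∑ u ∈ U, ∑ v ∈ Uᶜ, f v u)) := by
    simp only [hxbar, Finset.sum_add_distrib, Finset.sum_sub_distrib]
    ring
  by_cases hwU : w ∈ U
  · -- w inside U: use complement accounting
    have hw' : w ∉ Uᶜ := by simp [hwU]
    have hflow := flow_account f Uᶜ
    rw [compl_compl, hkey Uᶜ hw'] at hflow
    have hcomm1 : ∑ u ∈ Uᶜ, ∑ v ∈ U, f u v = ∑ u ∈ U, ∑ v ∈ Uᶜ, f v u :=
      Finset.sum_comm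
    have hcomm2 : ∑ u ∈ Uᶜ, ∑ v ∈ U, f v u = ∑ u ∈ U, ∑ v ∈ Uᶜ, f u v :=
      Finset.sum_comm
    have hFnet : (∑ u ∈ U, ∑ v ∈ Uᶜ, f u v) - (∑ u ∈ U, ∑ v ∈ Uᶜ, f v u)
        = - ∑ l ∈ (Finset.range k).filter (fun l => r l ∈ Uᶜ), mu l := by
      linarith
    have hsubset : Finset.range j ⊆ (Finset.range k).filter (fun l => r l ∈ Uᶜ) := by
      intro l hl
      rw [Finset.mem_range] at hl
      rw [Finset.mem_filter, Finset.mem_range, Finset.mem_compl]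
      exact ⟨by omega, hjmin l hl⟩
    have hge : ∑ l ∈ Finset.range j, mu l
        ≤ ∑ l ∈ (Finset.range k).filter (fun l => r l ∈ Uᶜ), mu l := by
      apply Finset.sum_le_sum_of_subset_of_nonneg hsubset
      intro l hl _
      rw [Finset.mem_filter, Finset.mem_range] at hl
      exact hmupos l hl.1
    have hrangej : ∑ l ∈ Finset.range j, mu l = lam (j - 1) := by
      have hins : Finset.range j = insert 0 (Finset.Icc 1 (j - 1)) := by
        ext l
        simp only [Finset.mem_range, Finset.mem_insert, Finset.mem_Icc]
        omega
      rw [hins, Finset.sum_insert (by simp)]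
      have ht := htel (j - 1) 1 le_rfl (by omega)
      simp only [Nat.sub_self, Nat.zero_add] at ht
      rw [ht, hmu 0 (by omega), if_pos rfl]
      ring
    have hxpos : 0 ≤ ∑ u ∈ U, ∑ v ∈ Uᶜ, x w u v := by
      apply Finset.sum_nonneg
      intro u hu
      apply Finset.sum_nonneg
      intro v hv
      rw [Finset.mem_compl] at hv
      exact hfeas.1 w u v (fun h => hv (h ▸ hu))
    linarith
  · -- w outside U
    have hflow := flow_account f U
    rw [hkey U hwU] at hflow
    have hJprop : ∀ l ∈ (Finset.range k).filter (fun l => r l ∈ U), j ≤ l ∧ l < k := by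
      intro l hl
      rw [Finset.mem_filter, Finset.mem_range] at hl
      refine ⟨?_, hl.1⟩
      by_contra h
      exact hjmin l (by omega) hl.2
    have hcut : ∀ q ∈ P, (q ∩ U).Nonempty → z w q ≤ ∑ u ∈ U, ∑ v ∈ Uᶜ, x w u v :=
      fun q hq hne => hfeas.2.2.2 w q hq U hwU hne
    by_cases hJ' : (((Finset.range k).filter (fun l => r l ∈ U)).filter
        (fun l => mu l ≠ 0)).Nonempty
    · obtain ⟨m, hmJ', hmax⟩ :
          ∃ m ∈ ((Finset.range k).filter (fun l => r l ∈ U)).filter (fun l => mu l ≠ 0),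
            ∀ l ∈ ((Finset.range k).filter (fun l => r l ∈ U)).filter (fun l => mu l ≠ 0),
              l ≤ m :=
        ⟨_, Finset.max'_mem _ hJ', fun l hl => Finset.le_max' _ l hl⟩
      rw [Finset.mem_filter] at hmJ'
      obtain ⟨hjm, hmk⟩ := hJprop m hmJ'.1
      have hrmU : r m ∈ U := (Finset.mem_filter.mp hmJ'.1).2
      have hsum1 : ∑ l ∈ (Finset.range k).filter (fun l => r l ∈ U), mu l
          = ∑ l ∈ ((Finset.range k).filter (fun l => r l ∈ U)).filter (fun l => mu l ≠ 0),
              mu l := (Finset.sum_filter_ne_zero _).symm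
      have hsub : ((Finset.range k).filter (fun l => r l ∈ U)).filter (fun l => mu l ≠ 0)
          ⊆ Finset.Icc j m := by
        intro l hl
        rw [Finset.mem_Icc]
        have hl' := Finset.mem_filter.mp hl
        exact ⟨(hJprop l hl'.1).1, hmax l hl⟩
      have hsum2 : ∑ l ∈ ((Finset.range k).filter (fun l => r l ∈ U)).filter
            (fun l => mu l ≠ 0), mu l ≤ ∑ l ∈ Finset.Icc j m, mu l := by
        apply Finset.sum_le_sum_of_subset_of_nonneg hsub
        intro l hl _
        rw [Finset.mem_Icc] at hl
        exact hmupos l (by omega)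
      have hsum3 : ∑ l ∈ Finset.Icc j m, mu l = lam m - lam (j - 1) := by
        have ht := htel (m - j + 1) j hj1 (by omega)
        have h2 : j - 1 + (m - j + 1) = m := by omega
        rw [h2] at ht
        exact ht
      have hlamlt : lam (m - 1) < lam m := by
        have h1 := hmu m hmk
        rw [if_neg (by omega)] at h1
        have h2 := hmupos m hmk
        have h3 := hmJ'.2
        rw [h1] at h2 h3
        rcases lt_or_eq_of_le h2 with h | h
        · linarith
        · exact absurd h.symm h3
      obtain ⟨q, hq, ⟨t, htm, hrt⟩, heq⟩ := (hlam m hmk).1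
      have ht_eq : t = m := by
        by_contra hne
        have : lam m ≤ lam (m - 1) :=
          (hlam (m - 1) (by omega)).2 ⟨q, hq, ⟨t, by omega, hrt⟩, heq⟩
        linarith
      subst ht_eq
      have hq_cut : z w q ≤ ∑ u ∈ U, ∑ v ∈ Uᶜ, x w u v :=
        hcut q hq ⟨r t, Finset.mem_inter.mpr ⟨hrt, hrmU⟩⟩
      linarith
    · have hzero : ∑ l ∈ (Finset.range k).filter (fun l => r l ∈ U), mu l = 0 := by
        rw [← Finset.sum_filter_ne_zero]
        rw [Finset.not_nonempty_iff_eq_empty.mp hJ']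
        simp
      have hzcut : z w ({r i, r j} : Finset V) ≤ ∑ u ∈ U, ∑ v ∈ Uᶜ, x w u v :=
        hcut _ hpP ⟨r j, Finset.mem_inter.mpr
          ⟨Finset.mem_insert_of_mem (Finset.mem_singleton_self _), hjU⟩⟩
      linarith
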